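/- Let λ > 0 and fix integers 1 ≤ i < j. Define Ψᵢⱼ⁽ⁿ⁾ = √( sinh((n+1-j)λ)·sinh(iλ) / (sinh((n+1-i)λ)·sinh(jλ)) ) and Ψᵢⱼ⁽^∞⁾ = e^{-(j-i)λ}·√((1 - e^{-2iλ})/(1 - e^{-2jλ})). Then Ψᵢⱼ⁽ⁿ⁾/Ψᵢⱼ⁽^∞⁾ = 1 - (1/2)(e^{2jλ} - e^{2iλ})·e^{-2(n+1)λ} + o(e^{-2(n+1)λ}) as n → ∞. -/

import Mathlib

private lemma key_alg (e1 e2 e3 e4 E u1 u2 u3 u4 : ℝ) (h : e1 * e2 = E * (e3 * e4))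
    (h3 : e3 ≠ 0) (h4 : e4 ≠ 0) (hu3 : u3 ≠ 0) (hu4 : u4 ≠ 0) :
    e1 * u1 / 2 * (e2 * u2 / 2) / (e3 * u3 / 2 * (e4 * u4 / 2)) = u1 / u3 * (E * (u2 / u4)) := by
  field_simp
  linear_combination (u1 * u2) * h

private lemma sinh_formula (t : ℝ) : Real.sinh t = Real.exp t * (1 - Real.exp (-2 * t)) / 2 := by
  have h : Real.exp t * Real.exp (-2 * t) = Real.exp (-t) := by
    rw [← Real.exp_add]; congr 1; ring
  rw [Real.sinh_eq]; linear_combination h / 2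

private lemma sqrt_ratio_deriv (A B : ℝ) :
    HasDerivAt (fun y : ℝ => Real.sqrt ((1 - A * y) / (1 - B * y))) (-(A - B) / 2) 0 := by
  have h1 : HasDerivAt (fun y : ℝ => 1 - A * y) (-A) 0 := by
    simpa using ((hasDerivAt_id (0 : ℝ)).const_mul A).const_sub 1
  have h2 : HasDerivAt (fun y : ℝ => 1 - B * y) (-B) 0 := by
    simpa using ((hasDerivAt_id (0 : ℝ)).const_mul B).const_sub 1
  have hg : HasDerivAt (fun y : ℝ => (1 - A * y) / (1 - B * y)) (-(A - B)) 0 := by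
    have := h1.div h2 (by norm_num)
    refine this.congr_deriv ?_
    norm_num; ring
  have hsq : HasDerivAt Real.sqrt (1 / (2 * Real.sqrt ((1 - A * 0) / (1 - B * 0))))
      ((1 - A * 0) / (1 - B * 0)) := Real.hasDerivAt_sqrt (by norm_num)
  have := hsq.comp 0 hg
  refine this.congr_deriv ?_
  norm_num; ring

private lemma ratio_eq (l : ℝ) (hl : 0 < l) (i j n : ℕ) (hi : 1 ≤ i) (hij : i < j) (hn : j ≤ n) :
    Real.sqrt (Real.sinh (((n : ℝ) + 1 - j) * l) * Real.sinh ((i : ℝ) * l) /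
            (Real.sinh (((n : ℝ) + 1 - i) * l) * Real.sinh ((j : ℝ) * l))) /
          (Real.exp (-((j : ℝ) - i) * l) *
            Real.sqrt ((1 - Real.exp (-2 * (i : ℝ) * l)) /
              (1 - Real.exp (-2 * (j : ℝ) * l)))) =
    Real.sqrt ((1 - Real.exp (2 * (j : ℝ) * l) * Real.exp (-2 * ((n : ℝ) + 1) * l)) /
      (1 - Real.exp (2 * (i : ℝ) * l) * Real.exp (-2 * ((n : ℝ) + 1) * l))) := by
  have hjn : (j : ℝ) ≤ n := Nat.cast_le.mpr hn
  have hin : (i : ℝ) < (j : ℝ) := Nat.cast_lt.mpr hij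
  have hi1 : (1 : ℝ) ≤ i := by exact_mod_cast hi
  have ha : (0 : ℝ) < ((n : ℝ) + 1 - j) * l := by
    apply mul_pos (by linarith) hl
  have hb : (0 : ℝ) < ((n : ℝ) + 1 - i) * l := by
    apply mul_pos (by linarith) hl
  have hil : (0 : ℝ) < (i : ℝ) * l := mul_pos (by linarith) hl
  have hjl : (0 : ℝ) < (j : ℝ) * l := mul_pos (by linarith) hl
  have h1 : Real.exp (-2 * (((n : ℝ) + 1 - j) * l)) =
      Real.exp (2 * (j : ℝ) * l) * Real.exp (-2 * ((n : ℝ) + 1) * l) := by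
    rw [← Real.exp_add]; congr 1; ring
  have h2 : Real.exp (-2 * (((n : ℝ) + 1 - i) * l)) =
      Real.exp (2 * (i : ℝ) * l) * Real.exp (-2 * ((n : ℝ) + 1) * l) := by
    rw [← Real.exp_add]; congr 1; ring
  have hA1 : 0 < 1 - Real.exp (2 * (j : ℝ) * l) * Real.exp (-2 * ((n : ℝ) + 1) * l) := by
    rw [← h1]
    simpa using Real.exp_lt_one_iff.mpr (by linarith : -2 * (((n : ℝ) + 1 - j) * l) < 0)
  have hB1 : 0 < 1 - Real.exp (2 * (i : ℝ) * l) * Real.exp (-2 * ((n : ℝ) + 1) * l) := by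
    rw [← h2]
    simpa using Real.exp_lt_one_iff.mpr (by linarith : -2 * (((n : ℝ) + 1 - i) * l) < 0)
  have hI1 : 0 < 1 - Real.exp (-2 * (i : ℝ) * l) := by
    simpa using Real.exp_lt_one_iff.mpr (by nlinarith : -2 * (i : ℝ) * l < 0)
  have hJ1 : 0 < 1 - Real.exp (-2 * (j : ℝ) * l) := by
    simpa using Real.exp_lt_one_iff.mpr (by nlinarith : -2 * (j : ℝ) * l < 0)
  have hE : Real.exp (((n : ℝ) + 1 - j) * l) * Real.exp ((i : ℝ) * l) =
      Real.exp (-((j : ℝ) - i) * l) ^ 2 *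
        (Real.exp (((n : ℝ) + 1 - i) * l) * Real.exp ((j : ℝ) * l)) := by
    rw [sq, ← Real.exp_add, ← Real.exp_add, ← Real.exp_add, ← Real.exp_add]; congr 1; ring
  have hIarg : Real.exp (-2 * ((i : ℝ) * l)) = Real.exp (-2 * (i : ℝ) * l) := by ring_nf
  have hJarg : Real.exp (-2 * ((j : ℝ) * l)) = Real.exp (-2 * (j : ℝ) * l) := by ring_nf
  have hS : Real.sinh (((n : ℝ) + 1 - j) * l) * Real.sinh ((i : ℝ) * l) /
      (Real.sinh (((n : ℝ) + 1 - i) * l) * Real.sinh ((j : ℝ) * l)) =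
      ((1 - Real.exp (2 * (j : ℝ) * l) * Real.exp (-2 * ((n : ℝ) + 1) * l)) /
        (1 - Real.exp (2 * (i : ℝ) * l) * Real.exp (-2 * ((n : ℝ) + 1) * l))) *
      (Real.exp (-((j : ℝ) - i) * l) ^ 2 *
        ((1 - Real.exp (-2 * (i : ℝ) * l)) / (1 - Real.exp (-2 * (j : ℝ) * l)))) := by
    rw [sinh_formula, sinh_formula, sinh_formula, sinh_formula, h1, h2, hIarg, hJarg]
    exact key_alg _ _ _ _ _ _ _ _ _ hE (Real.exp_ne_zero _) (Real.exp_ne_zero _)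
      hB1.ne' hJ1.ne'
  rw [hS]
  rw [Real.sqrt_mul (by positivity),
    Real.sqrt_mul (by positivity : (0:ℝ) ≤ Real.exp (-((j : ℝ) - i) * l) ^ 2),
    Real.sqrt_sq (Real.exp_pos _).le]
  rw [mul_div_assoc]
  rw [div_self (by positivity), mul_one]

theorem psi_ratio_expansion (l : ℝ) (hl : 0 < l) (i j : ℕ) (hi : 1 ≤ i) (hij : i < j) :
    (fun n : ℕ =>
        Real.sqrt (Real.sinh (((n : ℝ) + 1 - j) * l) * Real.sinh ((i : ℝ) * l) /
            (Real.sinh (((n : ℝ) + 1 - i) * l) * Real.sinh ((j : ℝ) * l))) /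
          (Real.exp (-((j : ℝ) - i) * l) *
            Real.sqrt ((1 - Real.exp (-2 * (i : ℝ) * l)) /
              (1 - Real.exp (-2 * (j : ℝ) * l)))) -
        (1 - (1 / 2) * (Real.exp (2 * (j : ℝ) * l) - Real.exp (2 * (i : ℝ) * l)) *
          Real.exp (-2 * ((n : ℝ) + 1) * l)))
      =o[Filter.atTop] (fun n : ℕ => Real.exp (-2 * ((n : ℝ) + 1) * l)) := by
  classical
  set A := Real.exp (2 * (j : ℝ) * l) with hAdef
  set B := Real.exp (2 * (i : ℝ) * l) with hBdef
  have hxne : ∀ n : ℕ, Real.exp (-2 * ((n : ℝ) + 1) * l) ≠ 0 :=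
    fun n => (Real.exp_pos _).ne'
  -- tendsto of x to 0 within {0}ᶜ
  have hx0 : Filter.Tendsto (fun n : ℕ => Real.exp (-2 * ((n : ℝ) + 1) * l)) Filter.atTop
      (nhdsWithin 0 {(0 : ℝ)}ᶜ) := by
    apply tendsto_nhdsWithin_of_tendsto_nhds_of_eventually_within
    · have h1 : Filter.Tendsto (fun n : ℕ => 2 * l * ((n : ℝ) + 1)) Filter.atTop Filter.atTop := by
        apply Filter.Tendsto.const_mul_atTop (by positivity)
        exact Filter.tendsto_atTop_add_const_right _ 1 tendsto_natCast_atTop_atTop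
      have h2 : Filter.Tendsto (fun n : ℕ => -2 * ((n : ℝ) + 1) * l) Filter.atTop Filter.atBot := by
        have := Filter.tendsto_neg_atTop_atBot.comp h1
        convert this using 2 with n
        simp [Function.comp]; ring
      exact Real.tendsto_exp_atBot.comp h2
    · exact Filter.Eventually.of_forall fun n => hxne n
  -- derivative / slope argument
  have hF := sqrt_ratio_deriv A B
  have hT : Filter.Tendsto (fun n : ℕ =>
      (Real.sqrt ((1 - A * Real.exp (-2 * ((n : ℝ) + 1) * l)) /
          (1 - B * Real.exp (-2 * ((n : ℝ) + 1) * l))) -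
        (1 - (A - B) / 2 * Real.exp (-2 * ((n : ℝ) + 1) * l))) /
        Real.exp (-2 * ((n : ℝ) + 1) * l)) Filter.atTop (nhds 0) := by
    have hslope := (hasDerivAt_iff_tendsto_slope.mp hF).comp hx0
    have h2 := hslope.add_const ((A - B) / 2)
    have h3 : -(A - B) / 2 + (A - B) / 2 = 0 := by ring
    rw [h3] at h2
    apply h2.congr
    intro n
    simp only [Function.comp, slope_def_field]
    rw [show Real.sqrt ((1 - A * (0:ℝ)) / (1 - B * 0)) = 1 by norm_num]
    rw [sub_zero]
    set s := Real.sqrt ((1 - A * Real.exp (-2 * ((n : ℝ) + 1) * l)) /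
        (1 - B * Real.exp (-2 * ((n : ℝ) + 1) * l))) with hs
    field_simp [hxne n]
    ring
  have hO : (fun n : ℕ =>
      Real.sqrt ((1 - A * Real.exp (-2 * ((n : ℝ) + 1) * l)) /
          (1 - B * Real.exp (-2 * ((n : ℝ) + 1) * l))) -
        (1 - (A - B) / 2 * Real.exp (-2 * ((n : ℝ) + 1) * l)))
      =o[Filter.atTop] (fun n : ℕ => Real.exp (-2 * ((n : ℝ) + 1) * l)) :=
    (Asymptotics.isLittleO_iff_tendsto fun n h => absurd h (hxne n)).mpr hT
  refine hO.congr' ?_ Filter.EventuallyEq.rfl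
  filter_upwards [Filter.eventually_ge_atTop j] with n hn
  rw [ratio_eq l hl i j n hi hij hn]
  ring
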